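/- Let K be a number field, O_K its ring of integers viewed as a discrete subgroup of ℂ (for K imaginary quadratic), λ ∈ O_K with |λ| > 1, and a ∈ ℂ*, b ∈ ℂ. Suppose (μ_i) is a sequence in O_K with μ_i − aλ^i → b as i → ∞. Then there exists m such that μ_i = aλ^i + b for all i ≥ m, and moreover a, b ∈ K. -/

import Mathlib

open Filter NumberField

theorem aux_eventually_eq (K : Type*) [Field K] [NumberField K]
    (hdeg : Module.finrank ℚ K = 2) (himag : IsEmpty (K →+* ℝ))
    (σ : K →+* ℂ) (ν : ℕ → 𝓞 K) (c : ℂ)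
    (h : Tendsto (fun i => σ (algebraMap (𝓞 K) K (ν i))) atTop (nhds c)) :
    ∀ᶠ i in atTop, σ (algebraMap (𝓞 K) K (ν i)) = c := by
  set f := fun i => σ (algebraMap (𝓞 K) K (ν i)) with hf
  have hne : ComplexEmbedding.conjugate σ ≠ σ := by
    intro hc
    exact himag.false (ComplexEmbedding.IsReal.embedding (ComplexEmbedding.isReal_iff.mpr hc))
  have hcard : Fintype.card (K →+* ℂ) = 2 := by
    rw [Embeddings.card K ℂ, hdeg]
  have hall : ∀ φ : K →+* ℂ, φ = σ ∨ φ = ComplexEmbedding.conjugate σ := by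
    classical
    intro φ
    have huniv : ({σ, ComplexEmbedding.conjugate σ} : Finset (K →+* ℂ)) = Finset.univ := by
      apply Finset.eq_univ_of_card
      rw [Finset.card_pair (Ne.symm hne), hcard]
    have hm := huniv ▸ Finset.mem_univ φ
    simpa using hm
  have hnorm : ∀ (φ : K →+* ℂ) (x : K), ‖φ x‖ = ‖σ x‖ := by
    intro φ x
    rcases hall φ with rfl | rfl
    · rfl
    · simp
  have hb : ∀ᶠ i in atTop, ‖f i‖ ≤ ‖c‖ + 1 := by
    have hball : ∀ᶠ i in atTop, f i ∈ Metric.ball c 1 :=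
      h.eventually_mem (Metric.ball_mem_nhds c one_pos)
    filter_upwards [hball] with i hi
    have h1 : ‖f i - c‖ < 1 := by simpa [Metric.mem_ball, dist_eq_norm] using hi
    calc ‖f i‖ = ‖f i - c + c‖ := by ring_nf
    _ ≤ ‖f i - c‖ + ‖c‖ := norm_add_le _ _
    _ ≤ ‖c‖ + 1 := by linarith
  have hfin : ({x : K | IsIntegral ℤ x ∧ ∀ φ : K →+* ℂ, ‖φ x‖ ≤ ‖c‖ + 1}).Finite :=
    Embeddings.finite_of_norm_le K ℂ (‖c‖ + 1)
  set F := σ '' {x : K | IsIntegral ℤ x ∧ ∀ φ : K →+* ℂ, ‖φ x‖ ≤ ‖c‖ + 1} with hF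
  have hFfin : F.Finite := hfin.image σ
  have hmem : ∀ᶠ i in atTop, f i ∈ F := by
    filter_upwards [hb] with i hi
    exact ⟨algebraMap (𝓞 K) K (ν i),
      ⟨NumberField.RingOfIntegers.isIntegral_coe (ν i), fun φ => by rw [hnorm φ]; exact hi⟩, rfl⟩
  have hclosed : IsClosed (F \ {c}) := (hFfin.subset Set.diff_subset).isClosed
  have hcnot : c ∉ F \ {c} := fun hc => hc.2 rfl
  have hopen : (F \ {c})ᶜ ∈ nhds c := hclosed.isOpen_compl.mem_nhds hcnot
  filter_upwards [hmem, h.eventually_mem hopen] with i h1 h2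
  by_contra hne2
  exact h2 ⟨h1, hne2⟩

/-- Let `K` be an imaginary quadratic field (degree 2 over `ℚ`, no real
embedding), embedded in `ℂ` via `σ`, so that `σ(O_K)` is a discrete subgroup of
`ℂ`. Let `λ ∈ O_K` with `|σ(λ)| > 1`, `a ∈ ℂ*`, `b ∈ ℂ`, and let `μ i ∈ O_K` be
a sequence with `σ(μ i) - a σ(λ)^i → b`. Then `σ(μ i) = a σ(λ)^i + b` for all
large `i`, and moreover `a` and `b` lie in `σ(K)`. -/
theorem stmt_4 (K : Type*) [Field K] [NumberField K]
    (hdeg : Module.finrank ℚ K = 2) (himag : IsEmpty (K →+* ℝ))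
    (σ : K →+* ℂ)
    (lam : 𝓞 K) (hlam : 1 < ‖σ (algebraMap (𝓞 K) K lam)‖)
    (a b : ℂ) (ha : a ≠ 0)
    (μ : ℕ → 𝓞 K)
    (hconv : Tendsto
      (fun i => σ (algebraMap (𝓞 K) K (μ i)) - a * (σ (algebraMap (𝓞 K) K lam)) ^ i)
      atTop (nhds b)) :
    (∃ m : ℕ, ∀ i ≥ m,
      σ (algebraMap (𝓞 K) K (μ i)) = a * (σ (algebraMap (𝓞 K) K lam)) ^ i + b) ∧
    (∃ a' : K, σ a' = a) ∧ (∃ b' : K, σ b' = b) := by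
  set L : ℂ := σ (algebraMap (𝓞 K) K lam) with hLdef
  set f : ℕ → ℂ := fun i => σ (algebraMap (𝓞 K) K (μ i)) with hfdef
  have hL0 : L ≠ 0 := by
    intro h0
    rw [h0] at hlam; simp at hlam; linarith
  have hL1 : (1 : ℂ) - L ≠ 0 := by
    intro h0
    have : L = 1 := by linear_combination -h0
    rw [this] at hlam; simp at hlam
  -- the difference sequence
  set ν : ℕ → 𝓞 K := fun i => μ (i + 1) - lam * μ i with hνdef
  have hν : ∀ i, σ (algebraMap (𝓞 K) K (ν i)) = f (i + 1) - L * f i := by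
    intro i; simp [hνdef, map_sub, map_mul, hfdef, hLdef]
  have hconv2 : Tendsto (fun i => σ (algebraMap (𝓞 K) K (ν i))) atTop (nhds (b - L * b)) := by
    have h1 : Tendsto (fun i =>
        (f (i + 1) - a * L ^ (i + 1)) - L * (f i - a * L ^ i)) atTop (nhds (b - L * b)) :=
      (hconv.comp (tendsto_add_atTop_nat 1)).sub (hconv.const_mul L)
    have heq : (fun i => (f (i + 1) - a * L ^ (i + 1)) - L * (f i - a * L ^ i))
        = fun i => σ (algebraMap (𝓞 K) K (ν i)) := by
      funext i; rw [hν i, pow_succ]; ring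
    rwa [heq] at h1
  have hevent := aux_eventually_eq K hdeg himag σ ν (b - L * b) hconv2
  rw [eventually_atTop] at hevent
  obtain ⟨m, hm⟩ := hevent
  have hmrec : ∀ i ≥ m, f (i + 1) - L * f i = b - L * b := by
    intro i hi; rw [← hν i]; exact hm i hi
  -- b ∈ σ(K)
  have hbK : ∃ b' : K, σ b' = b := by
    refine ⟨algebraMap (𝓞 K) K (ν m) / (1 - algebraMap (𝓞 K) K lam), ?_⟩
    have h1 : σ (algebraMap (𝓞 K) K (ν m)) = b - L * b := hm m le_rfl
    rw [map_div₀, h1, map_sub, map_one, ← hLdef]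
    field_simp
  -- recursion
  have hrec : ∀ n : ℕ, f (m + n) - b = L ^ n * (f m - b) := by
    intro n
    induction n with
    | zero => simp
    | succ n ih =>
      have h1 := hmrec (m + n) (Nat.le_add_right m n)
      have : f (m + n + 1) = L * f (m + n) + (b - L * b) := by linear_combination h1
      rw [show m + (n + 1) = m + n + 1 by ring, this, pow_succ]
      linear_combination L * ih
  -- the key constant vanishes
  have ht : f m - b - a * L ^ m = 0 := by
    by_contra ht
    set t : ℂ := f m - b - a * L ^ m with htdef
    have hg : ∀ n : ℕ, f (m + n) - a * L ^ (m + n) = L ^ n * t + b := by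
      intro n
      have := hrec n
      rw [htdef, pow_add]
      linear_combination this
    have h2 : Tendsto (fun n => f (m + n) - a * L ^ (m + n)) atTop (nhds b) := by
      have := hconv.comp (tendsto_add_atTop_nat m)
      simpa [Function.comp_def, Nat.add_comm] using this
    have h3 : Tendsto (fun n : ℕ => L ^ n * t + b) atTop (nhds b) := by
      rwa [show (fun n : ℕ => L ^ n * t + b) = fun n => f (m + n) - a * L ^ (m + n) by
        funext n; rw [hg n]]
    have h4 : Tendsto (fun n : ℕ => ‖L ^ n * t‖) atTop (nhds 0) := by
      have := (h3.sub_const b)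
      simp only [add_sub_cancel_right] at this
      simpa using this.norm
    have h5 : ∀ n : ℕ, ‖t‖ ≤ ‖L ^ n * t‖ := by
      intro n
      rw [norm_mul, norm_pow]
      nlinarith [one_le_pow₀ (le_of_lt hlam) (n:=n), norm_nonneg t,
        (norm_pos_iff.mpr ht)]
    have h6 : ‖t‖ ≤ 0 := le_of_tendsto_of_tendsto' tendsto_const_nhds h4 h5
    exact absurd (le_antisymm h6 (norm_nonneg t)) (fun h => ht (norm_eq_zero.mp h))
  have hfm : f m = a * L ^ m + b := by linear_combination ht
  have hmain : ∀ i ≥ m, f i = a * L ^ i + b := by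
    intro i hi
    obtain ⟨n, rfl⟩ := Nat.exists_eq_add_of_le hi
    have := hrec n
    rw [hfm] at this
    rw [pow_add]
    linear_combination this
  refine ⟨⟨m, hmain⟩, ?_, hbK⟩
  obtain ⟨b', hb'⟩ := hbK
  refine ⟨(algebraMap (𝓞 K) K (μ m) - b') / (algebraMap (𝓞 K) K lam) ^ m, ?_⟩
  rw [map_div₀, map_sub, map_pow, hb', ← hLdef]
  show (f m - b) / L ^ m = a
  rw [hfm]
  field_simp
  ring
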